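/- arXiv:2211.03682 — 4 statements merged into one kernel-verified Lean document; each statement's English description precedes it below -/
import Mathlib

section
/- Let F be a field, A a finite subset of F, and P a nonzero polynomial in t variables over F of total degree d. Then the number of tuples (r_1, ..., r_t) in A^t with P(r_1, ..., r_t) = 0 is at most d * |A|^(t-1). -/
open MvPolynomial Finset

private lemma sz_empty (F : Type*) [Field F] [DecidableEq F] (A : Finset F)
    (P : MvPolynomial (Fin 0) F) (hP : P ≠ 0) :
    ((Fintype.piFinset (fun _ : Fin 0 => A)).filter
        (fun r : Fin 0 → F => MvPolynomial.eval r P = 0)) = ∅ := by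
  apply Finset.filter_false_of_mem
  intro r _ h
  apply hP
  rw [eq_C_of_isEmpty P] at h ⊢
  rw [eval_C] at h
  rw [h, map_zero]

private lemma sz_strong (F : Type*) [Field F] [DecidableEq F] :
    ∀ (t : ℕ) (A : Finset F) (P : MvPolynomial (Fin t) F), P ≠ 0 →
      ((Fintype.piFinset (fun _ : Fin t => A)).filter
        (fun r : Fin t → F => MvPolynomial.eval r P = 0)).card * A.card
      ≤ P.totalDegree * A.card ^ t := by
  intro t
  induction t with
  | zero =>
    intro A P hP
    rw [sz_empty F A P hP]
    simp
  | succ n ih =>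
    intro A P hP
    set Q : Polynomial (MvPolynomial (Fin n) F) := finSuccEquiv F n P with hQdef
    have hQ : Q ≠ 0 := by
      intro h
      apply hP
      rw [hQdef] at h
      simpa using congrArg (finSuccEquiv F n).symm h
    set k : ℕ := Q.natDegree with hk
    set Pk : MvPolynomial (Fin n) F := Q.coeff k with hPk
    have hPk0 : Pk ≠ 0 := by
      simpa [hPk, hk] using Polynomial.leadingCoeff_ne_zero.mpr hQ
    have hdeg : Pk.totalDegree + k ≤ P.totalDegree :=
      totalDegree_coeff_finSuccEquiv_add_le P k hPk0
    set S := ((Fintype.piFinset (fun _ : Fin (n+1) => A)).filter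
        (fun r : Fin (n+1) → F => MvPolynomial.eval r P = 0)) with hS
    set B := Fintype.piFinset (fun _ : Fin n => A) with hB
    have hcard : S.card = ∑ s ∈ B, (A.filter
        (fun y => MvPolynomial.eval (Fin.cons y s) P = 0)).card := by
      rw [Finset.card_eq_sum_card_fiberwise (f := fun r : Fin (n+1) → F => Fin.tail r)
        (t := B)]
      · apply Finset.sum_congr rfl
        intro s hs
        apply Finset.card_bij (fun r _ => r 0)
        · intro r hr
          simp only [hS, Finset.mem_filter, Fintype.mem_piFinset] at hr
          obtain ⟨⟨h1, h2⟩, h3⟩ := hr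
          rw [Finset.mem_filter]
          refine ⟨h1 0, ?_⟩
          rw [← h3, Fin.cons_self_tail]
          exact h2
        · intro r1 h1 r2 h2 h
          simp only [Finset.mem_filter] at h1 h2
          have e1 : r1 = Fin.cons (r1 0) (Fin.tail r1) := (Fin.cons_self_tail r1).symm
          have e2 : r2 = Fin.cons (r2 0) (Fin.tail r2) := (Fin.cons_self_tail r2).symm
          rw [e1, e2, h1.2, h2.2, h]
        · intro y hy
          rw [Finset.mem_filter] at hy
          refine ⟨Fin.cons y s, ?_, by simp⟩
          simp only [hS, Finset.mem_filter, Fintype.mem_piFinset]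
          refine ⟨⟨?_, hy.2⟩, by simp⟩
          intro i
          refine Fin.cases ?_ (fun j => ?_) i
          · simpa using hy.1
          · simpa using (Fintype.mem_piFinset.mp hs) j
      · intro r hr
        simp only [hS, Finset.mem_coe, Finset.mem_filter, Fintype.mem_piFinset] at hr
        simp only [hB, Finset.mem_coe, Fintype.mem_piFinset]
        intro i
        exact hr.1 _
    have hbound : ∀ s ∈ B, (A.filter (fun y => MvPolynomial.eval (Fin.cons y s) P = 0)).card
        ≤ if MvPolynomial.eval s Pk = 0 then A.card else k := by
      intro s _
      split_ifs with h
      · exact Finset.card_filter_le _ _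
      · set q : Polynomial F := Q.map (MvPolynomial.eval s) with hq
        have hqk : q.coeff k ≠ 0 := by rw [hq, Polynomial.coeff_map]; exact h
        have hq0 : q ≠ 0 := fun hz => hqk (by simp [hz])
        have hsub : A.filter (fun y => MvPolynomial.eval (Fin.cons y s) P = 0)
            ⊆ q.roots.toFinset := by
          intro y hy
          rw [Finset.mem_filter] at hy
          rw [Multiset.mem_toFinset, Polynomial.mem_roots hq0]
          have he := eval_eq_eval_mv_eval' s y P
          rw [Polynomial.IsRoot, hq, hQdef, ← he]
          exact hy.2
        calc (A.filter (fun y => MvPolynomial.eval (Fin.cons y s) P = 0)).card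
            ≤ q.roots.toFinset.card := Finset.card_le_card hsub
          _ ≤ Multiset.card q.roots := Multiset.toFinset_card_le _
          _ ≤ q.natDegree := Polynomial.card_roots' q
          _ ≤ k := by rw [hq, hk]; exact Polynomial.natDegree_map_le
    set Z := B.filter (fun s => MvPolynomial.eval s Pk = 0) with hZdef
    have hZ : Z.card * A.card ≤ Pk.totalDegree * A.card ^ n := ih A Pk hPk0
    have hBn : (B.filter (fun s => ¬ MvPolynomial.eval s Pk = 0)).card ≤ A.card ^ n :=
      le_trans (Finset.card_filter_le _ _) (by simp [hB, Fintype.card_piFinset])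
    have hSle : S.card ≤ Z.card * A.card + A.card ^ n * k := by
      rw [hcard]
      refine (Finset.sum_le_sum hbound).trans ?_
      rw [Finset.sum_ite, Finset.sum_const, Finset.sum_const, smul_eq_mul, smul_eq_mul]
      exact add_le_add le_rfl (Nat.mul_le_mul_right _ hBn)
    calc S.card * A.card ≤ (Z.card * A.card + A.card ^ n * k) * A.card :=
          Nat.mul_le_mul_right _ hSle
      _ = (Z.card * A.card) * A.card + k * (A.card ^ n * A.card) := by ring
      _ ≤ (Pk.totalDegree * A.card ^ n) * A.card + k * (A.card ^ n * A.card) := by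
          exact add_le_add (Nat.mul_le_mul_right _ hZ) le_rfl
      _ = (Pk.totalDegree + k) * A.card ^ (n + 1) := by ring
      _ ≤ P.totalDegree * A.card ^ (n + 1) := Nat.mul_le_mul_right _ hdeg

/-- Schwartz-Zippel lemma (counting form): if `P` is a nonzero polynomial in `t`
variables over a field `F` of total degree `d`, and `A ⊆ F` is finite, then the
number of tuples in `A^t` on which `P` vanishes is at most `d * |A|^(t-1)`. -/
theorem schwartz_zippel_count (F : Type*) [Field F] [DecidableEq F] (t : ℕ)
    (A : Finset F) (P : MvPolynomial (Fin t) F) (hP : P ≠ 0) :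
    ((Fintype.piFinset (fun _ : Fin t => A)).filter
        (fun r : Fin t → F => MvPolynomial.eval r P = 0)).card
      ≤ P.totalDegree * A.card ^ (t - 1) := by
  match t with
  | 0 => rw [sz_empty F A P hP]; simp
  | n + 1 =>
    rcases Finset.eq_empty_or_nonempty A with rfl | hA
    · have : Fintype.piFinset (fun _ : Fin (n+1) => (∅ : Finset F)) = ∅ := by
        ext r; simp [Fintype.mem_piFinset]
      simp [this]
    · have hpos : 0 < A.card := Finset.card_pos.mpr hA
      have := sz_strong F (n+1) A P hP
      rw [pow_succ, ← mul_assoc] at this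
      have h2 := Nat.le_of_mul_le_mul_right this hpos
      simpa using h2
end

section
/- Let q be a prime power, n, m, t, ℓ positive integers with m ≤ t, m < q, and s a nonnegative integer. If C(ℓ+s, t) * (m/q)^n < s + 1, then there exists a sequence S of length ℓ over F_q^n such that every subsequence S' of S of length t satisfies e_m(S') ≠ 0 in F_q^n. -/
open Finset

/-- elementary symmetric function of a tuple -/
def Em {R : Type*} [CommRing R] (t m : ℕ) (g : Fin t → R) : R :=
  ∑ c ∈ Finset.powersetCard m (Finset.univ : Finset (Fin t)), ∏ i ∈ c, g i

lemma Em_cons {R : Type*} [CommRing R] (t m : ℕ) (x : R) (g : Fin t → R) :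
    Em (t+1) (m+1) (Fin.cons x g) = Em t (m+1) g + x * Em t m g := by
  classical
  set e : Fin t ↪ Fin (t+1) := ⟨Fin.succ, Fin.succ_injective t⟩ with he
  have h0 : (0 : Fin (t+1)) ∉ (univ : Finset (Fin t)).map e := by
    simp [he, Fin.succ_ne_zero]
  have hns : ∀ c : Finset (Fin t), (0 : Fin (t+1)) ∉ c.map e := by
    intro c; simp [he, Fin.succ_ne_zero]
  rw [Em, Fin.univ_succ, Finset.cons_eq_insert, powersetCard_succ_insert h0 m,
    powersetCard_map, powersetCard_map,
    map_eq_image (mapEmbedding e).toEmbedding (powersetCard m univ), image_image]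
  rw [sum_union]
  · congr 1
    · rw [sum_map]
      apply sum_congr rfl
      intro c _
      have : (mapEmbedding e).toEmbedding c = c.map e := rfl
      rw [this, prod_map]
      simp [he, Fin.cons_succ]
    · rw [sum_image]
      · rw [Em, mul_sum]
        apply sum_congr rfl
        intro c _
        have : (insert (0:Fin (t+1)) ∘ ⇑(mapEmbedding e).toEmbedding) c
            = insert 0 (c.map e) := rfl
        rw [this, prod_insert (hns c), Fin.cons_zero, prod_map]
        simp [he, Fin.cons_succ]
      · intro c1 _ c2 _ hins
        have hins' : insert (0:Fin (t+1)) (c1.map e) = insert 0 (c2.map e) := hins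
        have h2 := congrArg (Finset.erase · 0) hins'
        simp only [erase_insert (hns c1), erase_insert (hns c2)] at h2
        exact Finset.map_injective _ h2
  · rw [disjoint_left]
    intro c hc1 hc2
    have n1 : (0 : Fin (t+1)) ∉ c := by
      obtain ⟨c', -, rfl⟩ := mem_map.1 hc1
      exact hns c'
    obtain ⟨c', -, hc'⟩ := mem_image.1 hc2
    have : insert (0:Fin (t+1)) (c'.map e) = c := hc'
    rw [← this] at n1
    exact n1 (mem_insert_self _ _)

lemma Em_map {R : Type*} [CommRing R] {t N m : ℕ} (W : Fin N → R) (g : Fin t ↪ Fin N) :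
    ∑ c ∈ powersetCard m ((univ : Finset (Fin t)).map g), ∏ i ∈ c, W i
      = ∑ c ∈ powersetCard m (univ : Finset (Fin t)), ∏ i ∈ c, W (g i) := by
  rw [powersetCard_map, sum_map]
  apply sum_congr rfl
  intro c _
  have : (mapEmbedding g).toEmbedding c = c.map g := rfl
  rw [this, prod_map]

lemma map_orderEmbOfFin_univ {N : ℕ} (A : Finset (Fin N)) {t : ℕ} (hA : A.card = t) :
    (univ : Finset (Fin t)).map (A.orderEmbOfFin hA).toEmbedding = A := by
  ext x
  simp only [mem_map, RelEmbedding.coe_toEmbedding, mem_univ, true_and]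
  constructor
  · rintro ⟨i, rfl⟩; exact A.orderEmbOfFin_mem hA i
  · intro hx
    have hr := A.range_orderEmbOfFin hA
    have hx' : x ∈ Set.range (A.orderEmbOfFin hA) := by rw [hr]; exact hx
    obtain ⟨i, hi⟩ := hx'
    exact ⟨i, hi⟩

section
variable {F : Type*} [Field F] [Fintype F] [DecidableEq F]

lemma Zstep (t m : ℕ) :
    Fintype.card {h : Fin (t+1) → F // Em (t+1) (m+1) h = 0}
      ≤ Fintype.card F ^ t
        + Fintype.card F * Fintype.card {g : Fin t → F // Em t m g = 0} := by
  classical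
  have e1 : {p : (Fin t → F) × F // Em t (m+1) p.1 + p.2 * Em t m p.1 = 0}
      ≃ {h : Fin (t+1) → F // Em (t+1) (m+1) h = 0} := by
    refine Equiv.subtypeEquiv ((Equiv.prodComm _ _).trans (Fin.consEquiv fun _ => F)) ?_
    intro p
    have hp : ((Equiv.prodComm (Fin t → F) F).trans (Fin.consEquiv fun _ => F)) p
        = Fin.cons p.2 p.1 := rfl
    rw [hp, Em_cons]
  have e2 : {p : (Fin t → F) × F // Em t (m+1) p.1 + p.2 * Em t m p.1 = 0}
      ≃ Σ g : Fin t → F, {x : F // Em t (m+1) g + x * Em t m g = 0} :=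
    Equiv.subtypeProdEquivSigmaSubtype
      (fun (g : Fin t → F) (x : F) => Em t (m+1) g + x * Em t m g = 0)
  rw [← Fintype.card_congr e1, Fintype.card_congr e2, Fintype.card_sigma]
  have hb : ∀ g : Fin t → F, Fintype.card {x : F // Em t (m+1) g + x * Em t m g = 0}
      ≤ 1 + (if Em t m g = 0 then Fintype.card F else 0) := by
    intro g
    by_cases hz : Em t m g = 0
    · rw [if_pos hz]
      calc Fintype.card {x : F // Em t (m+1) g + x * Em t m g = 0}
          ≤ Fintype.card F := Fintype.card_subtype_le _
        _ ≤ 1 + Fintype.card F := by omega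
    · rw [if_neg hz, add_zero]
      refine Fintype.card_le_one_iff.2 ?_
      rintro ⟨x, hx⟩ ⟨y, hy⟩
      have hxy : x * Em t m g = y * Em t m g := by linear_combination hx - hy
      have := mul_right_cancel₀ hz hxy
      exact Subtype.ext this
  calc ∑ g : Fin t → F, Fintype.card {x : F // Em t (m+1) g + x * Em t m g = 0}
      ≤ ∑ g : Fin t → F, (1 + if Em t m g = 0 then Fintype.card F else 0) :=
        Finset.sum_le_sum fun g _ => hb g
    _ = Fintype.card F ^ t + Fintype.card F * Fintype.card {g : Fin t → F // Em t m g = 0} := by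
        rw [Finset.sum_add_distrib, Finset.sum_const, ← Finset.sum_filter,
          Finset.sum_const, Fintype.card_subtype]
        simp [Fintype.card_fun, mul_comm]

lemma Em_zero' {R : Type*} [CommRing R] (t : ℕ) (g : Fin t → R) : Em t 0 g = 1 := by
  simp [Em]

lemma Zzero (t : ℕ) : Fintype.card {g : Fin t → F // Em t 0 g = 0} = 0 := by
  rw [Fintype.card_eq_zero_iff]
  refine ⟨fun ⟨g, hg⟩ => ?_⟩
  rw [Em_zero'] at hg
  exact one_ne_zero hg

lemma Zmain : ∀ t m : ℕ, m + 1 ≤ t →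
    Fintype.card {g : Fin t → F // Em t (m+1) g = 0}
      ≤ (m+1) * Fintype.card F ^ (t-1) := by
  intro t
  induction t with
  | zero => intro m hm; omega
  | succ t ih =>
    intro m hm
    refine (Zstep t m).trans ?_
    match m with
    | 0 =>
      rw [Zzero]
      simp
    | m'+1 =>
      have h1 : m' + 1 ≤ t := by omega
      have h2 := ih m' h1
      calc Fintype.card F ^ t + Fintype.card F * Fintype.card {g : Fin t → F // Em t (m'+1) g = 0}
          ≤ Fintype.card F ^ t + Fintype.card F * ((m'+1) * Fintype.card F ^ (t-1)) := by
            exact Nat.add_le_add_left (Nat.mul_le_mul_left _ h2) _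
        _ ≤ (m'+1+1) * Fintype.card F ^ (t+1-1) := by
            have ht : t - 1 + 1 = t := by omega
            rw [Nat.add_sub_cancel]
            calc Fintype.card F ^ t + Fintype.card F * ((m'+1) * Fintype.card F ^ (t-1))
                = Fintype.card F ^ t + (m'+1) * (Fintype.card F ^ (t-1) * Fintype.card F) := by ring
              _ = Fintype.card F ^ t + (m'+1) * Fintype.card F ^ t := by
                  rw [← pow_succ, ht]
              _ = (m'+1+1) * Fintype.card F ^ t := by ring
              _ ≤ (m'+1+1) * Fintype.card F ^ t := le_rfl

lemma Em_apply {n t m : ℕ} (G : Fin t → (Fin n → F)) (j : Fin n) :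
    Em t m G j = Em t m (fun i => G i j) := by
  simp [Em, Finset.sum_apply, Finset.prod_apply]

lemma Zvec (n t m : ℕ) :
    Fintype.card {G : Fin t → (Fin n → F) // Em t m G = 0}
      = Fintype.card {g : Fin t → F // Em t m g = 0} ^ n := by
  classical
  have e1 : {G : Fin t → (Fin n → F) // Em t m G = 0}
      ≃ {h : Fin n → (Fin t → F) // ∀ j, Em t m (h j) = 0} := by
    refine Equiv.subtypeEquiv (Equiv.piComm fun _ _ => F) ?_
    intro G
    constructor
    · intro hG j
      have := congrFun hG j
      rw [Em_apply] at this
      exact this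
    · intro hG
      funext j
      rw [Em_apply]
      exact hG j
  have e2 : {h : Fin n → (Fin t → F) // ∀ j, Em t m (h j) = 0}
      ≃ ∀ _ : Fin n, {g : Fin t → F // Em t m g = 0} :=
    Equiv.subtypePiEquivPi (p := fun (_ : Fin n) (g : Fin t → F) => Em t m g = 0)
  rw [Fintype.card_congr (e1.trans e2), Fintype.card_pi]
  simp

end

lemma count_comp {N t : ℕ} {V : Type*} [Fintype V] [DecidableEq V] (g : Fin t ↪ Fin N)
    (Q : (Fin t → V) → Prop) [DecidablePred Q] :
    Fintype.card {W : Fin N → V // Q (W ∘ g)}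
      = Fintype.card {u : Fin t → V // Q u} * Fintype.card V ^ (N - t) := by
  classical
  set P : Fin N → Prop := fun x => x ∈ Set.range ⇑g with hP
  letI : DecidablePred P := fun x => Classical.propDecidable _
  let e1 : (Fin N → V) ≃ ({x // P x} → V) × ({x // ¬ P x} → V) :=
    Equiv.piEquivPiSubtypeProd P (fun _ => V)
  let e2 : Fin t ≃ {x // P x} := Equiv.ofInjective ⇑g g.injective
  have e3 : {W : Fin N → V // Q (W ∘ g)}
      ≃ {p : ({x // P x} → V) × ({x // ¬ P x} → V) // Q (p.1 ∘ e2)} := by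
    refine Equiv.subtypeEquiv e1 ?_
    intro W
    have : (e1 W).1 ∘ e2 = W ∘ g := rfl
    rw [this]
  have e4 : {p : ({x // P x} → V) × ({x // ¬ P x} → V) // Q (p.1 ∘ e2)}
      ≃ {a : {x // P x} → V // Q (a ∘ e2)} × ({x // ¬ P x} → V) :=
    { toFun := fun p => (⟨p.1.1, p.2⟩, p.1.2)
      invFun := fun q => ⟨(q.1.1, q.2), q.1.2⟩
      left_inv := fun p => rfl
      right_inv := fun q => rfl }
  have e5 : {u : Fin t → V // Q u} ≃ {a : {x // P x} → V // Q (a ∘ e2)} := by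
    refine Equiv.subtypeEquiv (Equiv.arrowCongr e2 (Equiv.refl V)) ?_
    intro u
    have : (Equiv.arrowCongr e2 (Equiv.refl V) u) ∘ e2 = u := by
      funext i
      simp
    rw [this]
  rw [Fintype.card_congr (e3.trans e4), Fintype.card_prod, ← Fintype.card_congr e5,
    Fintype.card_fun]
  congr 2
  rw [Fintype.card_subtype_compl, Fintype.card_fin]
  congr 1
  rw [← Fintype.card_congr e2, Fintype.card_fin]

/-- Expurgation lower bound: if `C(ℓ+s, t) * (m/q)^n < s + 1`, then there is a sequence
of length `ℓ` over `F_q^n` in which every subsequence of length `t` has `e_m ≠ 0`. -/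
theorem expurgation_lower_bound (q n m t ℓ s : ℕ) (hq : IsPrimePow q)
    (hn : 0 < n) (hm : 0 < m) (ht : 0 < t) (hℓ : 0 < ℓ) (hmt : m ≤ t) (hmq : m < q)
    (F : Type*) [Field F] [Fintype F] (hF : Fintype.card F = q)
    (h : ((ℓ + s).choose t : ℝ) * ((m : ℝ) / q) ^ n < s + 1) :
    ∃ S : Fin ℓ → (Fin n → F), ∀ f : Fin t → Fin ℓ, StrictMono f →
      (∑ c ∈ Finset.powersetCard m (Finset.univ : Finset (Fin t)),
        ∏ i ∈ c, S (f i)) ≠ 0 := by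
  classical
  set N := ℓ + s with hN
  haveI : NeZero N := ⟨by omega⟩
  set V := (Fin n → F) with hV
  -- the bad predicate
  set bad : (Fin N → V) → Finset (Fin N) → Prop :=
    fun W A => (∑ c ∈ powersetCard m A, ∏ i ∈ c, W i) = 0 with hbad
  have hq2 : 2 ≤ q := by omega
  have hqF : 1 ≤ Fintype.card F := Fintype.card_pos
  -- counting bound for a single A of size t
  have hcount : ∀ A ∈ powersetCard t (univ : Finset (Fin N)),
      (univ.filter (fun W : Fin N → V => bad W A)).card
        ≤ m ^ n * q ^ (n * (t-1)) * Fintype.card V ^ (N - t) := by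
    intro A hA
    have hAc : A.card = t := (mem_powersetCard_univ.1 hA)
    set g : Fin t ↪ Fin N := (A.orderEmbOfFin hAc).toEmbedding with hg
    have hmap : (univ : Finset (Fin t)).map g = A := _root_.map_orderEmbOfFin_univ A hAc
    have hiff : ∀ W : Fin N → V, bad W A ↔ Em t m (W ∘ g) = 0 := by
      intro W
      rw [hbad]
      dsimp only
      rw [← hmap, Em_map]
      rfl
    have hfe : (univ.filter (fun W : Fin N → V => bad W A))
        = (univ.filter (fun W : Fin N → V => Em t m (W ∘ g) = 0)) := by
      apply filter_congr
      intro W _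
      exact hiff W
    rw [hfe, ← Fintype.card_subtype,
      count_comp g (fun u : Fin t → V => Em t m u = 0), Zvec]
    apply Nat.mul_le_mul_right
    obtain ⟨m', rfl⟩ : ∃ m', m = m' + 1 := ⟨m - 1, by omega⟩
    calc Fintype.card {g : Fin t → F // Em t (m'+1) g = 0} ^ n
        ≤ ((m'+1) * Fintype.card F ^ (t-1)) ^ n :=
          Nat.pow_le_pow_left (Zmain t m' (by omega)) n
      _ = (m'+1) ^ n * q ^ (n * (t-1)) := by
          rw [mul_pow, hF, ← pow_mul, Nat.mul_comm (t-1) n]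
  -- there is a sequence with at most s bad subsets
  have hexists : ∃ W : Fin N → V,
      ((powersetCard t (univ : Finset (Fin N))).filter (fun A => bad W A)).card ≤ s := by
    by_contra hc
    push_neg at hc
    by_cases htN : t ≤ N
    · -- double counting
      have hlow : (s+1) * Fintype.card V ^ N
          ≤ ∑ W : Fin N → V,
            ((powersetCard t (univ : Finset (Fin N))).filter (fun A => bad W A)).card := by
        calc (s+1) * Fintype.card V ^ N = ∑ _W : Fin N → V, (s+1) := by
              rw [Finset.sum_const, card_univ, smul_eq_mul, mul_comm]
              congr 1
              rw [Fintype.card_fun (α := Fin N) (β := V), Fintype.card_fin]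
          _ ≤ _ := Finset.sum_le_sum fun W _ => hc W
      have hswap : ∑ W : Fin N → V,
            ((powersetCard t (univ : Finset (Fin N))).filter (fun A => bad W A)).card
          = ∑ A ∈ powersetCard t (univ : Finset (Fin N)),
            (univ.filter (fun W : Fin N → V => bad W A)).card := by
        simp_rw [Finset.card_filter]
        exact Finset.sum_comm
      have hhigh : ∑ A ∈ powersetCard t (univ : Finset (Fin N)),
            (univ.filter (fun W : Fin N → V => bad W A)).card
          ≤ N.choose t * (m ^ n * q ^ (n * (t-1)) * Fintype.card V ^ (N - t)) := by
        calc _ ≤ ∑ _A ∈ powersetCard t (univ : Finset (Fin N)),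
              m ^ n * q ^ (n * (t-1)) * Fintype.card V ^ (N - t) :=
              Finset.sum_le_sum hcount
          _ = _ := by
              rw [Finset.sum_const, smul_eq_mul, Finset.card_powersetCard, card_univ,
                Fintype.card_fin]
      have hnat : (s+1) * (q^n) ^ N
          ≤ N.choose t * (m ^ n * q ^ (n * (t-1)) * (q^n) ^ (N - t)) := by
        have hcV : Fintype.card V = q ^ n := by
          show Fintype.card (Fin n → F) = q ^ n
          rw [Fintype.card_fun, hF, Fintype.card_fin]
        rw [← hcV]
        exact hlow.trans (hswap.le.trans hhigh)
      -- cast to reals and contradict h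
      have hr : ((s:ℝ)+1) * ((q:ℝ)^n) ^ N
          ≤ (N.choose t : ℝ) * ((m:ℝ) ^ n * (q:ℝ) ^ (n * (t-1)) * ((q:ℝ)^n) ^ (N - t)) := by
        have := hnat
        exact_mod_cast this
      have hq0 : (0:ℝ) < (q:ℝ) := by positivity
      have hq0' : (q:ℝ) ≠ 0 := ne_of_gt hq0
      have hX : (0:ℝ) < ((q:ℝ)^n) ^ N := by positivity
      have hkey : ((N.choose t : ℝ) * ((m : ℝ) / q) ^ n) * ((q:ℝ)^n) ^ N
          = (N.choose t : ℝ) * ((m:ℝ) ^ n * (q:ℝ) ^ (n * (t-1)) * ((q:ℝ)^n) ^ (N - t)) := by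
        have hNe : N = 1 + (t-1) + (N-t) := by omega
        have hcm : ((q:ℝ)^n) ^ (t-1) = (q:ℝ) ^ (n * (t-1)) := by
          rw [← pow_mul]
        rw [show ((q:ℝ)^n) ^ N = ((q:ℝ)^n) ^ (1 + (t-1) + (N-t)) from by rw [← hNe]]
        rw [pow_add, pow_add, pow_one, div_pow, ← hcm]
        field_simp
      have hle : ((s:ℝ)+1) ≤ (N.choose t : ℝ) * ((m : ℝ) / q) ^ n := by
        have := hr
        rw [← hkey] at this
        exact le_of_mul_le_mul_right this hX
      have hlt : ((N:ℕ).choose t : ℝ) * ((m : ℝ) / q) ^ n < (s:ℝ) + 1 := by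
        exact_mod_cast h
      linarith
    · -- t > N : no subsets of size t at all
      have : powersetCard t (univ : Finset (Fin N)) = ∅ := by
        apply Finset.powersetCard_eq_empty.2
        rw [card_univ, Fintype.card_fin]
        omega
      have h0 := hc (fun _ => 0)
      rw [this, Finset.filter_empty, Finset.card_empty] at h0
      omega
  obtain ⟨W, hW⟩ := hexists
  -- expurgation
  set B := ((powersetCard t (univ : Finset (Fin N))).filter (fun A => bad W A)) with hB
  set D : Finset (Fin N) :=
    B.image (fun A => if hA : A.Nonempty then A.min' hA else 0) with hD
  have hDcard : D.card ≤ s := le_trans (Finset.card_image_le) hW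
  set G : Finset (Fin N) := univ \ D with hG
  have hGcard : ℓ ≤ G.card := by
    rw [hG, Finset.card_sdiff_of_subset (Finset.subset_univ D), card_univ, Fintype.card_fin]
    omega
  obtain ⟨G', hG'sub, hG'card⟩ := Finset.exists_subset_card_eq hGcard
  set emb := G'.orderEmbOfFin hG'card with hemb
  refine ⟨fun i => W (emb i), ?_⟩
  intro f hf
  set gfun : Fin t → Fin N := fun i => emb (f i) with hgfun
  have hgmono : StrictMono gfun := fun a b hab => emb.strictMono (hf hab)
  set gE : Fin t ↪ Fin N := ⟨gfun, hgmono.injective⟩ with hgE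
  set A := (univ : Finset (Fin t)).map gE with hA
  have hAcard : A.card = t := by rw [hA, card_map, card_univ, Fintype.card_fin]
  have hAG' : A ⊆ G' := by
    intro x hx
    rw [hA, mem_map] at hx
    obtain ⟨i, -, rfl⟩ := hx
    exact G'.orderEmbOfFin_mem hG'card (f i)
  have hApc : A ∈ powersetCard t (univ : Finset (Fin N)) :=
    mem_powersetCard_univ.2 hAcard
  have hAne : A.Nonempty := Finset.card_pos.1 (by omega)
  have hnotbad : ¬ bad W A := by
    intro hWA
    have hAB : A ∈ B := Finset.mem_filter.2 ⟨hApc, hWA⟩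
    have hmin : A.min' hAne ∈ D := by
      rw [hD, mem_image]
      exact ⟨A, hAB, by rw [dif_pos hAne]⟩
    have hminA : A.min' hAne ∈ A := A.min'_mem hAne
    have : A.min' hAne ∈ G := hG'sub (hAG' hminA)
    rw [hG, mem_sdiff] at this
    exact this.2 hmin
  intro hzero
  apply hnotbad
  rw [hbad]
  dsimp only
  rw [hA, Em_map]
  exact hzero
end

section
/- Let q = 3^k with k ≥ 1, let n ≥ 1, and fix 0 ≤ j ≤ n. Let S ⊆ F_q^n be a set of vectors, each having exactly j zero coordinates, such that for all pairwise distinct x, y, z ∈ S one has xy + yz + zx ≠ 0 in the ring F_q^n. Define P(x,y,z) = Π_{i=1}^n (1 - (x_i y_i + y_i z_i + z_i x_i)^{q-1}) as a function S × S × S → F_q. Then P(x,y,z) ≠ 0 if and only if x = y = z. -/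
/-- Helper: if `x ≠ z` have the same number of zero coordinates, there is a coordinate
where `x` is nonzero and differs from `z`. -/
lemma exists_coord_ne {n : ℕ} {F : Type*} [Field F] [DecidableEq F]
    (x z : Fin n → F) (hxz : x ≠ z)
    (hcard : ((Finset.univ : Finset (Fin n)).filter (fun i => x i = 0)).card =
      ((Finset.univ : Finset (Fin n)).filter (fun i => z i = 0)).card) :
    ∃ i, x i ≠ 0 ∧ x i ≠ z i := by
  set A := (Finset.univ : Finset (Fin n)).filter (fun i => x i = 0) with hA
  set B := (Finset.univ : Finset (Fin n)).filter (fun i => z i = 0) with hB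
  by_cases hAB : B ⊆ A
  · have hBA : B = A := Finset.eq_of_subset_of_card_le hAB (le_of_eq hcard)
    obtain ⟨i, hi⟩ : ∃ i, x i ≠ z i := by
      by_contra h; push_neg at h; exact hxz (funext h)
    refine ⟨i, ?_, hi⟩
    intro h0
    have hiA : i ∈ A := by simp [hA, h0]
    have hiB : i ∈ B := hBA ▸ hiA
    have : z i = 0 := by simpa [hB] using hiB
    exact hi (h0.trans this.symm)
  · obtain ⟨i, hiB, hiA⟩ := Finset.not_subset.mp hAB
    have hz : z i = 0 := by simpa [hB] using hiB
    have hx : x i ≠ 0 := by simpa [hA] using hiA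
    exact ⟨i, hx, by rw [hz]; exact hx⟩

/-- Lemma 4.8: let `q = 3^k` and let `S ⊆ F_q^n` consist of vectors with exactly `j`
zero coordinates such that `xy + yz + zx ≠ 0` for all pairwise distinct `x, y, z ∈ S`.
Then `P(x,y,z) = ∏ᵢ (1 - (xᵢyᵢ + yᵢzᵢ + zᵢxᵢ)^(q-1))` is nonzero on `S × S × S`
iff `x = y = z`. -/
theorem slice_rank_polynomial_diag (k n j : ℕ) (hk : 1 ≤ k) (hn : 1 ≤ n) (hj : j ≤ n)
    (F : Type*) [Field F] [Fintype F] [DecidableEq F] (hF : Fintype.card F = 3 ^ k)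
    (S : Set (Fin n → F))
    (hzero : ∀ v ∈ S, ((Finset.univ : Finset (Fin n)).filter (fun i => v i = 0)).card = j)
    (hS : ∀ x ∈ S, ∀ y ∈ S, ∀ z ∈ S, x ≠ y → y ≠ z → x ≠ z →
      x * y + y * z + z * x ≠ 0) :
    ∀ x ∈ S, ∀ y ∈ S, ∀ z ∈ S,
      ((∏ i : Fin n, (1 - (x i * y i + y i * z i + z i * x i) ^ (3 ^ k - 1))) ≠ (0 : F)
        ↔ (x = y ∧ y = z)) := by
  have h3 : (3 : F) = 0 := by
    have hcast : ((3 : ℕ) : F) ^ k = 0 := by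
      rw [← Nat.cast_pow, ← hF]; exact FiniteField.cast_card_eq_zero F
    have := (pow_eq_zero_iff (show k ≠ 0 by omega)).mp hcast
    exact_mod_cast this
  have hqpos : 1 ≤ 3 ^ k := Nat.one_le_pow _ _ (by norm_num)
  have hqne : 3 ^ k - 1 ≠ 0 := by
    have : 3 ≤ 3 ^ k := by calc 3 = 3 ^ 1 := (pow_one 3).symm
                                _ ≤ 3 ^ k := Nat.pow_le_pow_right (by norm_num) hk
    omega
  have hfac : ∀ a : F, (1 - a ^ (3 ^ k - 1)) ≠ 0 ↔ a = 0 := by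
    intro a
    by_cases ha : a = 0
    · simp [ha, zero_pow hqne]
    · have : a ^ (3 ^ k - 1) = 1 := by
        rw [← hF]; exact FiniteField.pow_card_sub_one_eq_one a ha
      simp [this, ha]
  intro x hx y hy z hz
  rw [Finset.prod_ne_zero_iff]
  constructor
  · intro hprod
    have hterm : ∀ i : Fin n, x i * y i + y i * z i + z i * x i = 0 := by
      intro i
      exact (hfac _).mp (hprod i (Finset.mem_univ i))
    by_contra hne
    by_cases hxy : x = y
    · by_cases hyz : y = z
      · exact hne ⟨hxy, hyz⟩
      · subst hxy
        obtain ⟨i, h0, hne'⟩ := exists_coord_ne x z hyz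
          ((hzero x hx).trans (hzero z hz).symm)
        have h := hterm i
        have : x i * (x i - z i) = 0 := by
          linear_combination h - x i * z i * h3
        rcases mul_eq_zero.mp this with h' | h'
        · exact h0 h'
        · exact hne' (sub_eq_zero.mp h')
    · by_cases hyz : y = z
      · subst hyz
        obtain ⟨i, h0, hne'⟩ := exists_coord_ne y x (Ne.symm hxy)
          ((hzero y hy).trans (hzero x hx).symm)
        have h := hterm i
        have : y i * (y i - x i) = 0 := by
          linear_combination h - x i * y i * h3
        rcases mul_eq_zero.mp this with h' | h'
        · exact h0 h'
        · exact hne' (sub_eq_zero.mp h')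
      · by_cases hxz : x = z
        · subst hxz
          obtain ⟨i, h0, hne'⟩ := exists_coord_ne x y hxy
            ((hzero x hx).trans (hzero y hy).symm)
          have h := hterm i
          have : x i * (x i - y i) = 0 := by
            linear_combination h - x i * y i * h3
          rcases mul_eq_zero.mp this with h' | h'
          · exact h0 h'
          · exact hne' (sub_eq_zero.mp h')
        · refine hS x hx y hy z hz hxy hyz hxz (funext ?_)
          intro i
          simpa using hterm i
  · rintro ⟨hxy, hyz⟩ i _
    subst hxy; subst hyz
    rw [hfac]
    linear_combination x i * x i * h3
end

section
/- Let p be an odd prime, q = p^k, n ≥ 1, and let S ⊆ F_q^n be a set such that no p pairwise distinct elements x_1, ..., x_p ∈ S satisfy e_{p-1}(x_1, ..., x_p) = 0 in F_q^n. For P ⊆ {1, ..., n}, let S_P = {v ∈ S : supp(v) = P} where supp(v) is the set of coordinates where v is nonzero, and let S_P'' ⊆ (F_q*)^{|P|} be obtained by restricting each v ∈ S_P to the coordinates in P and inverting each coordinate. Then |S_P''| = |S_P|, and S_P'' contains no p pairwise distinct elements summing to zero in F_q^{|P|}. -/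
/-- Sum over `(p-1)`-subsets of a `p`-element universe equals sum over erased points. -/
lemma aux_sum_powersetCard {p : ℕ} (hp0 : 0 < p) {F : Type*} [CommRing F] (g : Fin p → F) :
    (∑ c ∈ Finset.powersetCard (p - 1) (Finset.univ : Finset (Fin p)),
        ∏ j ∈ c, g j)
      = ∑ j : Fin p, ∏ j' ∈ Finset.univ.erase j, g j' := by
  refine (Finset.sum_bij (fun (j : Fin p) _ => Finset.univ.erase j) ?_ ?_ ?_ ?_).symm
  · intro a _
    simp [Finset.mem_powersetCard, Finset.card_erase_of_mem]
  · intro a _ b _ h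
    by_contra hab
    have h' : Finset.univ.erase a = Finset.univ.erase b := h
    have : a ∈ Finset.univ.erase b := Finset.mem_erase.mpr ⟨hab, Finset.mem_univ a⟩
    rw [← h'] at this
    exact (Finset.mem_erase.mp this).1 rfl
  · intro c hc
    rw [Finset.mem_powersetCard] at hc
    have hne : (Finset.univ \ c).Nonempty := by
      rw [← Finset.card_pos, Finset.card_sdiff_of_subset hc.1, Finset.card_univ, Fintype.card_fin,
        hc.2]
      omega
    obtain ⟨a, ha⟩ := hne
    rw [Finset.mem_sdiff] at ha
    refine ⟨a, Finset.mem_univ a, ?_⟩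
    apply (Finset.eq_of_subset_of_card_le ?_ ?_).symm
    · intro x hx
      exact Finset.mem_erase.mpr ⟨fun h => ha.2 (h ▸ hx), Finset.mem_univ x⟩
    · rw [Finset.card_erase_of_mem (Finset.mem_univ a), Finset.card_univ, Fintype.card_fin,
        hc.2]
  · intro a _; rfl

/-- Key reduction in Theorem 4.4: if no `p` pairwise distinct elements of `S ⊆ F_q^n`
(`q = p^k`, `p` an odd prime) have vanishing `e_{p-1}`, then for each support set `P`,
the set `S_P''` obtained from `S_P = {v ∈ S : supp v = P}` by restricting to the
coordinates in `P` and inverting each coordinate has the same cardinality as `S_P` and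
contains no `p` pairwise distinct elements summing to zero. -/
theorem support_class_reduction (p k n : ℕ) (hp : p.Prime) (hodd : Odd p)
    (hk : 0 < k) (hn : 0 < n)
    (F : Type*) [Field F] [Fintype F] [DecidableEq F] (hF : Fintype.card F = p ^ k)
    (S : Finset (Fin n → F))
    (hS : ¬ ∃ x : Fin p → (Fin n → F), (∀ j, x j ∈ S) ∧ Function.Injective x ∧
      (∑ c ∈ Finset.powersetCard (p - 1) (Finset.univ : Finset (Fin p)),
        ∏ j ∈ c, x j) = 0)
    (P : Finset (Fin n)) :
    ((S.filter (fun v => ∀ i, v i ≠ 0 ↔ i ∈ P)).image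
        (fun v => fun i : {i // i ∈ P} => (v i.1)⁻¹)).card
      = (S.filter (fun v => ∀ i, v i ≠ 0 ↔ i ∈ P)).card ∧
    ¬ ∃ y : Fin p → ({i // i ∈ P} → F),
      (∀ j, y j ∈ (S.filter (fun v => ∀ i, v i ≠ 0 ↔ i ∈ P)).image
          (fun v => fun i : {i // i ∈ P} => (v i.1)⁻¹)) ∧
      Function.Injective y ∧ (∑ j : Fin p, y j) = 0 := by
  set SP := S.filter (fun v => ∀ i, v i ≠ 0 ↔ i ∈ P) with hSP
  set f : (Fin n → F) → ({i // i ∈ P} → F) := fun v => fun i => (v i.1)⁻¹ with hf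
  have hinj : Set.InjOn f SP := by
    intro v hv w hw hvw
    rw [hSP, Finset.coe_filter, Set.mem_setOf_eq] at hv hw
    funext i
    by_cases hi : i ∈ P
    · have := congrFun hvw ⟨i, hi⟩
      simpa [hf] using inv_injective this
    · have h1 : v i = 0 := by by_contra h; exact hi ((hv.2 i).mp h)
      have h2 : w i = 0 := by by_contra h; exact hi ((hw.2 i).mp h)
      rw [h1, h2]
  refine ⟨Finset.card_image_of_injOn hinj, ?_⟩
  rintro ⟨y, hy, hyinj, hysum⟩
  -- pick preimages
  have hx : ∀ j, ∃ v ∈ SP, f v = y j := by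
    intro j
    obtain ⟨v, hv, hfv⟩ := Finset.mem_image.mp (hy j)
    exact ⟨v, hv, hfv⟩
  choose x hxS hxy using hx
  have hxinj : Function.Injective x := by
    intro a b hab
    apply hyinj
    rw [← hxy a, ← hxy b, hab]
  apply hS
  refine ⟨x, fun j => (Finset.mem_filter.mp (hxS j)).1, hxinj, ?_⟩
  funext i
  have hmem : ∀ j i', x j i' ≠ 0 ↔ i' ∈ P := fun j => (Finset.mem_filter.mp (hxS j)).2
  rw [Finset.sum_apply]
  simp only [Finset.prod_apply, Pi.zero_apply]
  by_cases hi : i ∈ P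
  · rw [aux_sum_powersetCard hp.pos (fun j => x j i)]
    have key : ∀ j : Fin p, ∏ j' ∈ Finset.univ.erase j, x j' i
        = (∏ j' : Fin p, x j' i) * (x j i)⁻¹ := by
      intro j
      have := Finset.mul_prod_erase Finset.univ (fun j' => x j' i) (Finset.mem_univ j)
      field_simp [(hmem j i).mpr hi] at this ⊢
      linear_combination this
    simp only [key, ← Finset.mul_sum]
    have : ∑ j : Fin p, (x j i)⁻¹ = 0 := by
      have := congrFun hysum ⟨i, hi⟩
      rw [Finset.sum_apply] at this
      simpa [← hxy, hf] using this
    rw [this, mul_zero]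
  · apply Finset.sum_eq_zero
    intro c hc
    rw [Finset.mem_powersetCard] at hc
    have hcne : c.Nonempty := by
      rw [← Finset.card_pos, hc.2]
      have := hp.two_le; omega
    obtain ⟨j, hj⟩ := hcne
    apply Finset.prod_eq_zero hj
    by_contra h
    exact hi ((hmem j i).mp h)
end
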